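/- Let E and F be Banach lattices and let T : E → F be a sublinear and monotone operator. Then T is automatically Lipschitz continuous: the quantity ‖T‖ := sup{‖T(f)‖ : f ∈ E, ‖f‖ ≤ 1} is finite, and ‖T(f) − T(g)‖ ≤ ‖T‖·‖f − g‖ for all f, g ∈ E. -/

import Mathlib

/-- **Theorem `thmKrein`.** Every sublinear and monotone operator
`T : E → F` between Banach lattices is Lipschitz continuous: the norm
`‖T‖ = sup {‖T f‖ : ‖f‖ ≤ 1}` is finite, and `‖T f - T g‖ ≤ ‖T‖ ‖f - g‖`. -/
theorem sublinear_monotone_lipschitz {E F : Type*}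
    [NormedAddCommGroup E] [Lattice E] [HasSolidNorm E] [IsOrderedAddMonoid E] [NormedSpace ℝ E] [CompleteSpace E]
    [NormedAddCommGroup F] [Lattice F] [HasSolidNorm F] [IsOrderedAddMonoid F] [NormedSpace ℝ F] [CompleteSpace F]
    (T : E → F)
    (hsub : ∀ f g : E, T (f + g) ≤ T f + T g)
    (hhom : ∀ (α : ℝ), 0 ≤ α → ∀ f : E, T (α • f) = α • T f)
    (hmono : ∀ f g : E, f ≤ g → T f ≤ T g) :
    BddAbove {c : ℝ | ∃ f : E, ‖f‖ ≤ 1 ∧ c = ‖T f‖} ∧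
      ∀ f g : E, ‖T f - T g‖ ≤ sSup {c : ℝ | ∃ f : E, ‖f‖ ≤ 1 ∧ c = ‖T f‖} * ‖f - g‖ := by
  set S : Set ℝ := {c : ℝ | ∃ f : E, ‖f‖ ≤ 1 ∧ c = ‖T f‖} with hS
  have hT0 : T 0 = 0 := by
    have := hhom 0 le_rfl 0
    simpa using this
  have hsubd : ∀ f g : E, T f - T g ≤ T (f - g) := by
    intro f g
    have h := hsub g (f - g)
    rw [add_sub_cancel] at h
    exact sub_le_iff_le_add'.mpr h
  have habs : ∀ f g : E, |T f - T g| ≤ T |f - g| := by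
    intro f g
    rw [abs_le']
    refine ⟨(hsubd f g).trans (hmono _ _ (le_abs_self _)), ?_⟩
    rw [neg_sub]
    exact (hsubd g f).trans (hmono _ _ (by rw [abs_sub_comm]; exact le_abs_self _))
  have hTabs : ∀ h : E, |T h| ≤ T |h| := by
    intro h
    simpa [hT0] using habs h 0
  have hTpos : ∀ h : E, 0 ≤ T |h| := fun h => (abs_nonneg _).trans (hTabs h)
  -- torsion-freeness type fact in lattice ordered groups
  have two_step : ∀ a : E, 0 ≤ 2 • a → 0 ≤ a := fun a ha => nsmul_two_semiclosed ha
  have pow_step : ∀ (k : ℕ) (a : E), 0 ≤ 2 ^ k • a → 0 ≤ a := by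
    intro k
    induction k with
    | zero => intro a ha; simpa using ha
    | succ k ih =>
      intro a ha
      refine two_step a (ih (2 • a) ?_)
      rw [smul_smul, ← pow_succ]
      exact ha
  have hbdd : BddAbove S := by
    by_contra hb
    rw [not_bddAbove_iff] at hb
    have hex : ∀ n : ℕ, ∃ f : E, ‖f‖ ≤ 1 ∧ (n : ℝ) * 2 ^ n < ‖T f‖ := by
      intro n
      obtain ⟨c, ⟨f, hf1, rfl⟩, hc⟩ := hb ((n : ℝ) * 2 ^ n)
      exact ⟨f, hf1, hc⟩
    choose f hf1 hf2 using hex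
    have hterm_eq : ∀ k : ℕ, (2 : ℕ) ^ k • ((1 / 2 : ℝ) ^ k • |f k|) = |f k| := by
      intro k
      rw [← Nat.cast_smul_eq_nsmul ℝ, smul_smul]
      push_cast
      rw [← mul_pow]
      norm_num
    have hterm_nonneg : ∀ k : ℕ, (0 : E) ≤ (1 / 2 : ℝ) ^ k • |f k| := by
      intro k
      exact pow_step k _ (by rw [hterm_eq k]; exact abs_nonneg _)
    have hsum : Summable (fun n : ℕ => ((1 : ℝ) / 2) ^ n • |f n|) := by
      apply Summable.of_norm
      refine Summable.of_nonneg_of_le (fun n => norm_nonneg _) (fun n => ?_)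
        summable_geometric_two
      rw [norm_smul]
      have h1 : ‖|f n|‖ ≤ 1 := by rw [norm_abs_eq_norm]; exact hf1 n
      have h2 : ‖((1 : ℝ) / 2) ^ n‖ = ((1 : ℝ) / 2) ^ n := by
        rw [Real.norm_eq_abs, abs_of_nonneg (by positivity)]
      rw [h2]
      nlinarith [pow_pos (show (0:ℝ) < 1/2 by norm_num) n]
    set g : E := ∑' n, ((1 : ℝ) / 2) ^ n • |f n| with hg
    have hle : ∀ n : ℕ, ((1 : ℝ) / 2) ^ n • |f n| ≤ g :=
      fun n => Summable.le_tsum hsum n (fun m _ => hterm_nonneg m)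
    have hle2 : ∀ n : ℕ, |f n| ≤ (2 : ℝ) ^ n • g := by
      intro n
      have h := nsmul_le_nsmul_right (hle n) ((2 : ℕ) ^ n)
      rw [hterm_eq n] at h
      rwa [← Nat.cast_smul_eq_nsmul ℝ, Nat.cast_pow, Nat.cast_ofNat] at h
    have key : ∀ n : ℕ, ‖T (f n)‖ ≤ (2 : ℝ) ^ n * ‖T g‖ := by
      intro n
      have h1 : T |f n| ≤ (2 : ℝ) ^ n • T g := by
        have := hmono _ _ (hle2 n)
        rwa [hhom _ (by positivity) g] at this
      have h2 : |T (f n)| ≤ (2 : ℝ) ^ n • T g := (hTabs (f n)).trans h1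
      have h3 : (0 : F) ≤ (2 : ℝ) ^ n • T g := (abs_nonneg _).trans h2
      have h4 : ‖T (f n)‖ ≤ ‖(2 : ℝ) ^ n • T g‖ := by
        refine HasSolidNorm.solid ?_
        rwa [abs_of_nonneg h3]
      rwa [norm_smul, Real.norm_eq_abs, abs_of_nonneg (by positivity : (0:ℝ) ≤ 2 ^ n)] at h4
    have hlt : ∀ n : ℕ, (n : ℝ) < ‖T g‖ := by
      intro n
      have h := (hf2 n).trans_le (key n)
      have hp : (0 : ℝ) < 2 ^ n := by positivity
      nlinarith
    obtain ⟨n, hn⟩ := exists_nat_gt ‖T g‖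
    exact absurd (hlt n) (not_lt.mpr hn.le)
  refine ⟨hbdd, ?_⟩
  have hunit : ∀ u : E, ‖u‖ ≤ 1 → ‖T u‖ ≤ sSup S := fun u hu => le_csSup hbdd ⟨u, hu, rfl⟩
  have hlin : ∀ h : E, ‖T h‖ ≤ sSup S * ‖h‖ := by
    intro h
    rcases eq_or_ne h 0 with rfl | hne
    · simp [hT0]
    · have hr : (0 : ℝ) < ‖h‖ := norm_pos_iff.mpr hne
      have heq : T h = ‖h‖ • T (‖h‖⁻¹ • h) := by
        rw [← hhom ‖h‖ hr.le, smul_smul, mul_inv_cancel₀ hr.ne', one_smul]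
      have hu : ‖(‖h‖⁻¹ • h)‖ ≤ 1 := by
        rw [norm_smul, Real.norm_eq_abs, abs_of_nonneg (by positivity),
          inv_mul_cancel₀ hr.ne']
      calc ‖T h‖ = ‖h‖ * ‖T (‖h‖⁻¹ • h)‖ := by
            rw [heq, norm_smul, Real.norm_eq_abs, abs_of_nonneg hr.le]
        _ ≤ ‖h‖ * sSup S := mul_le_mul_of_nonneg_left (hunit _ hu) hr.le
        _ = sSup S * ‖h‖ := mul_comm _ _
  intro f g
  have h1 : ‖T f - T g‖ ≤ ‖T |f - g|‖ := by
    refine HasSolidNorm.solid ?_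
    rw [abs_of_nonneg (hTpos (f - g))]
    exact habs f g
  calc ‖T f - T g‖ ≤ ‖T |f - g|‖ := h1
    _ ≤ sSup S * ‖|f - g|‖ := hlin _
    _ = sSup S * ‖f - g‖ := by rw [norm_abs_eq_norm]
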